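/- Let F : ℝ → ℝ be of class C² with 0 = F(0) = min_{t∈ℝ} F(t) and F''(0) > 0. Then for any b with 0 ≤ b < 2√(F''(0)) and any T > 0, there exist ε > 0 and θ > 0 such that for every q ≤ b and every C² function u : [0,T] → ℝ with u'(0) = u'(T) = 0 and ∫₀ᵀ (u''(x)² + u(x)²) dx ≤ ε², one has J_q(u) ≥ θ·∫₀ᵀ (u''(x)² + u(x)²) dx. -/

import Mathlib

set_option maxHeartbeats 1000000

open intervalIntegral Real

section StmtAux
open Set MeasureTheory

private lemma cd_deriv {u : ℝ → ℝ} (hu : ContDiff ℝ 2 u) : ContDiff ℝ 1 (deriv u) := by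
  have h2 : ContDiff ℝ ((1:ℕ)+1) u := by norm_num; exact hu
  exact (contDiff_succ_iff_deriv.mp h2).2.2

private lemma itd2 (u : ℝ → ℝ) : iteratedDeriv 2 u = deriv (deriv u) := by
  simp [iteratedDeriv_succ, iteratedDeriv_one]

private lemma cont_itd2 {u : ℝ → ℝ} (hu : ContDiff ℝ 2 u) : Continuous (iteratedDeriv 2 u) := by
  rw [itd2]; exact (cd_deriv hu).continuous_deriv le_rfl

private lemma quad_bound (F : ℝ → ℝ) (hF : ContDiff ℝ 2 F)
    (hF0 : F 0 = 0) (hmin : ∀ t : ℝ, F 0 ≤ F t)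
    (c δ : ℝ) (hδ : 0 < δ)
    (hc : ∀ s ∈ Icc (-δ) δ, 2 * c ≤ iteratedDeriv 2 F s) :
    ∀ t ∈ Icc (-δ) δ, c * t ^ 2 ≤ F t := by
  set g : ℝ → ℝ := fun t => F t - c * t ^ 2 with hg
  have hFd : Differentiable ℝ F := hF.differentiable (by norm_num)
  have hg' : ∀ t, HasDerivAt g (deriv F t - 2 * c * t) t := by
    intro t
    have h1 : HasDerivAt (fun t : ℝ => c * t ^ 2) (c * (2 * t)) t :=
      (hasDerivAt_pow 2 t).const_mul c |>.congr_deriv (by ring)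
    exact ((hFd t).hasDerivAt.sub h1).congr_deriv (by ring)
  have hgd' : ∀ t, deriv g t = deriv F t - 2 * c * t := fun t => (hg' t).deriv
  set g' : ℝ → ℝ := fun t => deriv F t - 2 * c * t with hgp
  have hg'' : ∀ t, HasDerivAt g' (iteratedDeriv 2 F t - 2 * c) t := by
    intro t
    have h0 : HasDerivAt (deriv F) (iteratedDeriv 2 F t) t := by
      rw [itd2]; exact ((cd_deriv hF).differentiable one_ne_zero t).hasDerivAt
    have h1 : HasDerivAt (fun t : ℝ => 2 * c * t) (2 * c) t := by
      simpa using (hasDerivAt_id t).const_mul (2 * c)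
    exact h0.sub h1
  have hg'mono : MonotoneOn g' (Icc (-δ) δ) := by
    apply monotoneOn_of_deriv_nonneg (convex_Icc _ _)
      (fun t _ => ((hg'' t).continuousAt).continuousWithinAt)
      (fun t _ => ((hg'' t).differentiableAt).differentiableWithinAt)
    intro t ht
    rw [interior_Icc] at ht
    rw [(hg'' t).deriv]
    have := hc t (Ioo_subset_Icc_self ht)
    linarith
  have hF'0 : deriv F 0 = 0 := by
    have : IsLocalMin F 0 := Filter.Eventually.of_forall hmin
    exact this.deriv_eq_zero
  have hg'0 : g' 0 = 0 := by simp [hgp, hF'0]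
  have h0mem : (0:ℝ) ∈ Icc (-δ) δ := by constructor <;> linarith
  intro t ht
  have key : (0:ℝ) ≤ g t := by
    rcases le_total 0 t with h | h
    · have hmono : MonotoneOn g (Icc 0 δ) := by
        apply monotoneOn_of_deriv_nonneg (convex_Icc _ _)
          (fun s _ => ((hg' s).continuousAt).continuousWithinAt)
          (fun s _ => ((hg' s).differentiableAt).differentiableWithinAt)
        intro s hs
        rw [interior_Icc] at hs
        rw [hgd' s]
        have hsm : s ∈ Icc (-δ) δ := ⟨by linarith [hs.1], le_of_lt hs.2⟩
        have := hg'mono h0mem hsm (le_of_lt hs.1)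
        rw [hg'0] at this
        exact this
      have := hmono ⟨le_rfl, le_of_lt hδ⟩ ⟨h, ht.2⟩ h
      simpa [hg, hF0] using this
    · have hmono : AntitoneOn g (Icc (-δ) 0) := by
        apply antitoneOn_of_deriv_nonpos (convex_Icc _ _)
          (fun s _ => ((hg' s).continuousAt).continuousWithinAt)
          (fun s _ => ((hg' s).differentiableAt).differentiableWithinAt)
        intro s hs
        rw [interior_Icc] at hs
        rw [hgd' s]
        have hsm : s ∈ Icc (-δ) δ := ⟨le_of_lt hs.1, by linarith [hs.2]⟩
        have := hg'mono hsm h0mem (le_of_lt hs.2)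
        rw [hg'0] at this
        exact this
      have := hmono ⟨ht.1, h⟩ ⟨by linarith, le_rfl⟩ h
      simpa [hg, hF0] using this
  simpa [hg, sub_nonneg] using key

private lemma ibp {u : ℝ → ℝ} {T : ℝ} (hu : ContDiff ℝ 2 u)
    (h0 : deriv u 0 = 0) (hT' : deriv u T = 0) :
    ∫ x in (0:ℝ)..T, (deriv u x) ^ 2 = - ∫ x in (0:ℝ)..T, u x * iteratedDeriv 2 u x := by
  have hud : Differentiable ℝ u := hu.differentiable (by norm_num)
  have hdu : Continuous (deriv u) := (cd_deriv hu).continuous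
  have key : ∫ x in (0:ℝ)..T, (deriv u x * deriv u x + u x * iteratedDeriv 2 u x)
      = u T * deriv u T - u 0 * deriv u 0 := by
    apply intervalIntegral.integral_deriv_mul_eq_sub
    · exact fun x _ => (hud x).hasDerivAt
    · intro x _
      rw [itd2]; exact ((cd_deriv hu).differentiable one_ne_zero x).hasDerivAt
    · exact hdu.intervalIntegrable _ _
    · exact (cont_itd2 hu).intervalIntegrable _ _
  rw [h0, hT'] at key
  simp only [mul_zero, sub_zero] at key
  have hsplit : ∫ x in (0:ℝ)..T, (deriv u x * deriv u x + u x * iteratedDeriv 2 u x)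
      = (∫ x in (0:ℝ)..T, (deriv u x)^2) + ∫ x in (0:ℝ)..T, u x * iteratedDeriv 2 u x := by
    rw [← intervalIntegral.integral_add (f := fun x => deriv u x ^ 2)
      (g := fun x => u x * iteratedDeriv 2 u x) ((hdu.pow 2).intervalIntegrable _ _)
      ((hu.continuous.mul (cont_itd2 hu)).intervalIntegrable _ _)]
    congr 1; ext x; ring
  rw [hsplit] at key
  linarith

private lemma deriv_sq_bound {u : ℝ → ℝ} {T : ℝ} (hu : ContDiff ℝ 2 u) (hT : 0 ≤ T)
    (h0 : deriv u 0 = 0) (hT' : deriv u T = 0) {lam : ℝ} (hlam : 0 < lam) :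
    ∫ x in (0:ℝ)..T, (deriv u x) ^ 2
      ≤ lam * (∫ x in (0:ℝ)..T, (u x) ^ 2)
        + (1 / (4 * lam)) * ∫ x in (0:ℝ)..T, (iteratedDeriv 2 u x) ^ 2 := by
  rw [ibp hu h0 hT']
  have h1 : - ∫ x in (0:ℝ)..T, u x * iteratedDeriv 2 u x
      = ∫ x in (0:ℝ)..T, -(u x * iteratedDeriv 2 u x) := by
    rw [intervalIntegral.integral_neg]
  rw [h1]
  have h2 : ∫ x in (0:ℝ)..T, -(u x * iteratedDeriv 2 u x)
      ≤ ∫ x in (0:ℝ)..T, (lam * (u x)^2 + (1/(4*lam)) * (iteratedDeriv 2 u x)^2) := by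
    apply intervalIntegral.integral_mono_on hT
      (((hu.continuous.mul (cont_itd2 hu)).neg).intervalIntegrable _ _)
      ((((continuous_const.mul (hu.continuous.pow 2)).add
        (continuous_const.mul ((cont_itd2 hu).pow 2)))).intervalIntegrable _ _)
    intro x _
    show -(u x * iteratedDeriv 2 u x) ≤ lam * (u x)^2 + (1/(4*lam)) * (iteratedDeriv 2 u x)^2
    rw [← sub_nonneg]
    have key : lam * (u x) ^ 2 + 1 / (4 * lam) * (iteratedDeriv 2 u x) ^ 2
        - -(u x * iteratedDeriv 2 u x)
        = (2 * lam * u x + iteratedDeriv 2 u x) ^ 2 / (4 * lam) := by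
      field_simp; ring
    rw [key]
    positivity
  calc _ ≤ _ := h2
    _ = _ := by
      rw [intervalIntegral.integral_add (f := fun x => lam * u x ^ 2)
        (g := fun x => 1 / (4 * lam) * iteratedDeriv 2 u x ^ 2)
        ((continuous_const.mul (hu.continuous.pow 2)).intervalIntegrable _ _)
        ((continuous_const.mul ((cont_itd2 hu).pow 2)).intervalIntegrable _ _),
        intervalIntegral.integral_const_mul, intervalIntegral.integral_const_mul]

private lemma piece_le {f g : ℝ → ℝ} {T : ℝ} (hf : Continuous f) (hg : Continuous g)
    (habs : ∀ t, |f t| ≤ g t) {a b : ℝ} (hab : a ≤ b)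
    (ha : a ∈ Icc (0:ℝ) T) (hb : b ∈ Icc (0:ℝ) T) :
    ∫ t in a..b, f t ≤ ∫ t in (0:ℝ)..T, g t := by
  have hg0 : ∀ t, 0 ≤ g t := fun t => (abs_nonneg _).trans (habs t)
  have h1 : ∫ t in a..b, f t ≤ ∫ t in a..b, g t :=
    intervalIntegral.integral_mono_on hab (hf.intervalIntegrable _ _)
      (hg.intervalIntegrable _ _) (fun t _ => (le_abs_self _).trans (habs t))
  have e1 : (∫ t in (0:ℝ)..a, g t) + ∫ t in a..b, g t = ∫ t in (0:ℝ)..b, g t :=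
    integral_add_adjacent_intervals (hg.intervalIntegrable _ _) (hg.intervalIntegrable _ _)
  have e2 : (∫ t in (0:ℝ)..b, g t) + ∫ t in b..T, g t = ∫ t in (0:ℝ)..T, g t :=
    integral_add_adjacent_intervals (hg.intervalIntegrable _ _) (hg.intervalIntegrable _ _)
  have n1 : 0 ≤ ∫ t in (0:ℝ)..a, g t :=
    intervalIntegral.integral_nonneg ha.1 (fun t _ => hg0 t)
  have n3 : 0 ≤ ∫ t in b..T, g t :=
    intervalIntegral.integral_nonneg hb.2 (fun t _ => hg0 t)
  linarith

private lemma integral_piece_le {f g : ℝ → ℝ} {T : ℝ} (hf : Continuous f) (hg : Continuous g)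
    (habs : ∀ t, |f t| ≤ g t) {a b : ℝ}
    (ha : a ∈ Icc (0:ℝ) T) (hb : b ∈ Icc (0:ℝ) T) :
    ∫ t in a..b, f t ≤ ∫ t in (0:ℝ)..T, g t := by
  rcases le_total a b with h | h
  · exact piece_le hf hg habs h ha hb
  · rw [intervalIntegral.integral_symm]
    have := piece_le (f := fun t => -f t) hf.neg hg (fun t => by simpa using habs t) h hb ha
    rw [intervalIntegral.integral_neg] at this
    linarith

private lemma sup_bound {u : ℝ → ℝ} {T : ℝ} (hu : ContDiff ℝ 2 u) (hT : 0 < T) :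
    ∀ x ∈ Icc (0:ℝ) T, (u x) ^ 2
      ≤ (1/T) * (∫ t in (0:ℝ)..T, (u t)^2) + (∫ t in (0:ℝ)..T, (u t)^2)
        + ∫ t in (0:ℝ)..T, (deriv u t)^2 := by
  intro x hx
  have uc : Continuous u := hu.continuous
  have hdu : Continuous (deriv u) := (cd_deriv hu).continuous
  have hud : Differentiable ℝ u := hu.differentiable (by norm_num)
  obtain ⟨y, hy, hymin⟩ := isCompact_Icc.exists_isMinOn (nonempty_Icc.2 hT.le)
    ((uc.pow 2).continuousOn)
  have hmin2 : T * (u y) ^ 2 ≤ ∫ t in (0:ℝ)..T, (u t) ^ 2 := by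
    have := intervalIntegral.integral_mono_on hT.le
      (_root_.intervalIntegrable_const (μ := volume) (c := (u y)^2))
      ((uc.pow 2).intervalIntegrable _ _)
      (fun t ht => hymin ht)
    simpa [mul_comm] using this
  have ftc : (u x) ^ 2 - (u y) ^ 2 = ∫ t in y..x, 2 * u t * deriv u t := by
    rw [intervalIntegral.integral_eq_sub_of_hasDerivAt
      (f := fun s => (u s)^2) (f' := fun t => 2 * u t * deriv u t) (fun t _ => by
        have h : HasDerivAt (u ^ 2) (2 * u t * deriv u t) t := by
          simpa [mul_comm, mul_assoc] using ((hud t).hasDerivAt.pow 2)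
        exact h)
      (((continuous_const.mul uc).mul hdu).intervalIntegrable _ _)]
  have habs : ∀ t, |2 * u t * deriv u t| ≤ (u t)^2 + (deriv u t)^2 := by
    intro t
    rw [abs_le]
    constructor <;> nlinarith [sq_nonneg (u t + deriv u t), sq_nonneg (u t - deriv u t)]
  have hint : ∫ t in y..x, 2 * u t * deriv u t
      ≤ ∫ t in (0:ℝ)..T, ((u t)^2 + (deriv u t)^2) :=
    integral_piece_le ((continuous_const.mul uc).mul hdu)
      ((uc.pow 2).add (hdu.pow 2)) habs hy hx
  have hsplit : ∫ t in (0:ℝ)..T, ((u t)^2 + (deriv u t)^2)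
      = (∫ t in (0:ℝ)..T, (u t)^2) + ∫ t in (0:ℝ)..T, (deriv u t)^2 :=
    intervalIntegral.integral_add ((uc.pow 2).intervalIntegrable _ _)
      ((hdu.pow 2).intervalIntegrable _ _)
  have hyT : (u y)^2 ≤ (1/T) * ∫ t in (0:ℝ)..T, (u t)^2 := by
    rw [one_div, le_inv_mul_iff₀ hT]
    linarith
  linarith [ftc, hint, hsplit, hyT]

end StmtAux

private lemma final_arith {θ A B I1 lam b c q G : ℝ}
    (p1 : θ * A ≤ (1/2 - b/2 * (1/(4*lam))) * A)
    (p2 : θ * B ≤ (c - b/2 * lam) * B)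
    (hqI : q * I1 ≤ b * (lam * B + 1/(4*lam) * A))
    (hFB : c * B ≤ G) :
    θ * (A + B) ≤ 1/2 * A - q/2 * I1 + G := by
  linarith [p1, p2, hqI, hFB]

theorem stmt11 (F : ℝ → ℝ) (hF : ContDiff ℝ 2 F)
    (hF0 : F 0 = 0) (hmin : ∀ t : ℝ, F 0 ≤ F t)
    (hF'' : 0 < iteratedDeriv 2 F 0)
    (b T : ℝ) (hb0 : 0 ≤ b) (hb : b < 2 * Real.sqrt (iteratedDeriv 2 F 0)) (hT : 0 < T) :
    ∃ ε > (0:ℝ), ∃ θ > (0:ℝ), ∀ q : ℝ, q ≤ b →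
      ∀ u : ℝ → ℝ, ContDiff ℝ 2 u → deriv u 0 = 0 → deriv u T = 0 →
        (∫ x in (0:ℝ)..T, ((iteratedDeriv 2 u x) ^ 2 + (u x) ^ 2)) ≤ ε ^ 2 →
        (∫ x in (0:ℝ)..T,
            ((iteratedDeriv 2 u x) ^ 2 / 2 - q * (deriv u x) ^ 2 / 2 + F (u x)))
          ≥ θ * ∫ x in (0:ℝ)..T, ((iteratedDeriv 2 u x) ^ 2 + (u x) ^ 2) := by
  set M := iteratedDeriv 2 F 0 with hM
  have hb2 : b ^ 2 < 4 * M := by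
    have hss : Real.sqrt M * Real.sqrt M = M := Real.mul_self_sqrt hF''.le
    have h1 : b * b < (2 * Real.sqrt M) * (2 * Real.sqrt M) := mul_self_lt_mul_self hb0 hb
    have h2 : (2 * Real.sqrt M) * (2 * Real.sqrt M) = 4 * M := by
      rw [show (2 * Real.sqrt M) * (2 * Real.sqrt M)
        = 4 * (Real.sqrt M * Real.sqrt M) from by ring, hss]
    nlinarith [h1, h2]
  set c : ℝ := M / 4 + b ^ 2 / 16 with hc
  have hcpos : 0 < c := by positivity
  have hc8 : b ^ 2 < 8 * c := by rw [hc]; linarith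
  have h2cM : 2 * c < M := by rw [hc]; linarith
  -- find δ
  obtain ⟨δ₀, hδ₀, hδprop⟩ := Metric.continuousAt_iff.mp (cont_itd2 hF).continuousAt
    (M - 2 * c) (by linarith)
  set δ : ℝ := δ₀ / 2 with hδdef
  have hδ : 0 < δ := by positivity
  have hc2 : ∀ s ∈ Set.Icc (-δ) δ, 2 * c ≤ iteratedDeriv 2 F s := by
    intro s hs
    have hds : dist s 0 < δ₀ := by
      rw [Real.dist_eq, sub_zero, abs_lt]
      constructor <;> [linarith [hs.1]; linarith [hs.2]]
    have := hδprop hds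
    rw [Real.dist_eq, ← hM, abs_lt] at this
    linarith [this.1]
  have hquad := quad_bound F hF hF0 hmin c δ hδ hc2
  -- constants
  set K : ℝ := 1 / T + 2 with hK
  have hKpos : 0 < K := by positivity
  set ε : ℝ := Real.sqrt (δ ^ 2 / K) with hε
  have hεpos : 0 < ε := Real.sqrt_pos.mpr (by positivity)
  have hεsq : ε ^ 2 = δ ^ 2 / K := Real.sq_sqrt (by positivity)
  set lam : ℝ := Real.sqrt (c / 2) with hlam
  have hlampos : 0 < lam := Real.sqrt_pos.mpr (by positivity)
  have hlamsq : lam ^ 2 = c / 2 := Real.sq_sqrt (by positivity)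
  have hblam : b < 4 * lam := by
    by_contra h
    push_neg at h
    have h1 : (4 * lam) ^ 2 ≤ b ^ 2 := pow_le_pow_left₀ (by positivity) h 2
    have h2 : (4 * lam) ^ 2 = 16 * lam ^ 2 := by ring
    rw [h2, hlamsq] at h1
    linarith
  set θ : ℝ := min (1/2 - (b/2) * (1/(4*lam))) (c - (b/2) * lam) with hθ
  have hθ1pos : 0 < 1/2 - (b/2) * (1/(4*lam)) := by
    rw [sub_pos, div_mul_div_comm, div_lt_div_iff₀ (by positivity) two_pos]
    nlinarith [hblam]
  have hθ2pos : 0 < c - (b/2) * lam := by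
    have h1 : b * lam < 4 * lam * lam := mul_lt_mul_of_pos_right hblam hlampos
    nlinarith [h1, hlamsq]
  have hθpos : 0 < θ := lt_min hθ1pos hθ2pos
  refine ⟨ε, hεpos, θ, hθpos, ?_⟩
  intro q hq u hu h0 hT' hN
  have uc : Continuous u := hu.continuous
  have hdu : Continuous (deriv u) := (cd_deriv hu).continuous
  have hitd : Continuous (iteratedDeriv 2 u) := cont_itd2 hu
  set A : ℝ := ∫ x in (0:ℝ)..T, (iteratedDeriv 2 u x) ^ 2 with hA
  set B : ℝ := ∫ x in (0:ℝ)..T, (u x) ^ 2 with hB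
  set I1 : ℝ := ∫ x in (0:ℝ)..T, (deriv u x) ^ 2 with hI1
  have hNsplit : (∫ x in (0:ℝ)..T, ((iteratedDeriv 2 u x) ^ 2 + (u x) ^ 2)) = A + B :=
    intervalIntegral.integral_add ((hitd.pow 2).intervalIntegrable _ _)
      ((uc.pow 2).intervalIntegrable _ _)
  have hApos : 0 ≤ A := intervalIntegral.integral_nonneg hT.le (fun x _ => sq_nonneg _)
  have hBpos : 0 ≤ B := intervalIntegral.integral_nonneg hT.le (fun x _ => sq_nonneg _)
  have hI1pos : 0 ≤ I1 := intervalIntegral.integral_nonneg hT.le (fun x _ => sq_nonneg _)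
  rw [hNsplit] at hN
  have hI1b : I1 ≤ lam * B + (1/(4*lam)) * A := deriv_sq_bound hu hT.le h0 hT' hlampos
  have hI1b1 : I1 ≤ 1 * B + (1/(4*1)) * A := deriv_sq_bound hu hT.le h0 hT' one_pos
  -- sup bound
  have hsup : ∀ x ∈ Set.Icc (0:ℝ) T, (u x) ^ 2 ≤ δ ^ 2 := by
    intro x hx
    have h1 := sup_bound hu hT x hx
    have h2 : (1/T) * B + B + I1 ≤ K * (A + B) := by
      rw [hK]
      have hTA : 0 ≤ 1/T * A := by positivity
      have e : (1/T + 2) * (A + B) = 1/T * A + 1/T * B + 2 * A + 2 * B := by ring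
      rw [e]
      norm_num at hI1b1
      linarith [hI1b1, hApos, hTA]
    have h3 : K * (A + B) ≤ K * ε ^ 2 := by
      apply mul_le_mul_of_nonneg_left hN hKpos.le
    have h4 : K * ε ^ 2 = δ ^ 2 := by
      rw [hεsq]; field_simp
    calc (u x)^2 ≤ (1/T) * B + B + I1 := h1
      _ ≤ K * (A + B) := h2
      _ ≤ K * ε ^ 2 := h3
      _ = δ ^ 2 := h4
  have hmem : ∀ x ∈ Set.Icc (0:ℝ) T, u x ∈ Set.Icc (-δ) δ := by
    intro x hx
    have := hsup x hx
    constructor <;> nlinarith [hδ.le]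
  -- F lower bound
  have hFB : c * B ≤ ∫ x in (0:ℝ)..T, F (u x) := by
    have h1 : ∫ x in (0:ℝ)..T, c * (u x) ^ 2 ≤ ∫ x in (0:ℝ)..T, F (u x) := by
      apply intervalIntegral.integral_mono_on hT.le
        ((continuous_const.mul (uc.pow 2)).intervalIntegrable _ _)
        (Continuous.intervalIntegrable (by exact hF.continuous.comp uc) _ _)
      intro x hx
      exact hquad (u x) (hmem x hx)
    rwa [intervalIntegral.integral_const_mul] at h1
  have hFu : Continuous fun x => F (u x) := hF.continuous.comp uc
  -- split J
  have hJ : (∫ x in (0:ℝ)..T,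
        ((iteratedDeriv 2 u x) ^ 2 / 2 - q * (deriv u x) ^ 2 / 2 + F (u x)))
      = (1/2) * A - (q/2) * I1 + ∫ x in (0:ℝ)..T, F (u x) := by
    have e0 : ∀ x : ℝ, (iteratedDeriv 2 u x) ^ 2 / 2 - q * (deriv u x) ^ 2 / 2 + F (u x)
        = ((1/2) * (iteratedDeriv 2 u x) ^ 2 - (q/2) * (deriv u x) ^ 2) + F (u x) := by
      intro x; ring
    simp_rw [e0]
    rw [intervalIntegral.integral_add
      (f := fun x => 1/2 * iteratedDeriv 2 u x ^ 2 - q/2 * deriv u x ^ 2) (g := fun x => F (u x))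
      (((continuous_const.mul (hitd.pow 2)).sub
        (continuous_const.mul (hdu.pow 2))).intervalIntegrable _ _)
      (hFu.intervalIntegrable _ _),
      intervalIntegral.integral_sub (f := fun x => 1/2 * iteratedDeriv 2 u x ^ 2)
      (g := fun x => q/2 * deriv u x ^ 2)
      ((continuous_const.mul (hitd.pow 2)).intervalIntegrable _ _)
      ((continuous_const.mul (hdu.pow 2)).intervalIntegrable _ _),
      intervalIntegral.integral_const_mul, intervalIntegral.integral_const_mul]
  rw [hJ, ge_iff_le, hNsplit]
  -- bound q * I1
  have hqI : q * I1 ≤ b * (lam * B + (1/(4*lam)) * A) := by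
    rcases le_or_gt q 0 with h | h
    · have h1 : q * I1 ≤ 0 := mul_nonpos_of_nonpos_of_nonneg h hI1pos
      have h2 : 0 ≤ b * (lam * B + (1/(4*lam)) * A) := by positivity
      linarith
    · calc q * I1 ≤ b * I1 := mul_le_mul_of_nonneg_right hq hI1pos
        _ ≤ b * (lam * B + (1/(4*lam)) * A) := mul_le_mul_of_nonneg_left hI1b hb0
  have p1 : θ * A ≤ (1/2 - (b/2) * (1/(4*lam))) * A :=
    mul_le_mul_of_nonneg_right (min_le_left _ _) hApos
  have p2 : θ * B ≤ (c - (b/2) * lam) * B :=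
    mul_le_mul_of_nonneg_right (min_le_right _ _) hBpos
  exact final_arith p1 p2 hqI hFB
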